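/- Decay estimate: under the hypotheses of the radial comparison principle, |u_1(ρ) - u_2(ρ)| ≤ C · (sup over ρ = ρ* of |u_1 - u_2|) · e^{-3ρ} for all ρ ≥ ρ*, where C depends only on ρ*. -/

import Mathlib

open Real Set Filter

noncomputable def xiF (ρ : ℝ) : ℝ := Real.exp (-2*ρ) / Real.sinh ρ
noncomputable def xiF' (ρ : ℝ) : ℝ :=
  (-2 * Real.exp (-2*ρ) * Real.sinh ρ - Real.exp (-2*ρ) * Real.cosh ρ) / (Real.sinh ρ)^2

lemma xiF_pos {ρ : ℝ} (hρ : 0 < ρ) : 0 < xiF ρ :=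
  div_pos (Real.exp_pos _) (Real.sinh_pos_iff.2 hρ)

lemma hasDerivAt_xiF {ρ : ℝ} (hρ : 0 < ρ) : HasDerivAt xiF (xiF' ρ) ρ := by
  have hs : Real.sinh ρ ≠ 0 := ne_of_gt (Real.sinh_pos_iff.2 hρ)
  have h1 : HasDerivAt (fun ρ : ℝ => Real.exp (-2*ρ)) (-2 * Real.exp (-2*ρ)) ρ := by
    have h : HasDerivAt (fun ρ : ℝ => -2*ρ) (-2) ρ := by
      simpa using (hasDerivAt_id ρ).const_mul (-2 : ℝ)
    simpa [mul_comm] using h.exp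
  have := h1.div (Real.hasDerivAt_sinh ρ) hs
  have he : xiF' ρ = (-2 * Real.exp (-2*ρ) * Real.sinh ρ - Real.exp (-2*ρ) * Real.cosh ρ) / (Real.sinh ρ)^2 := rfl
  rw [he]
  exact this

lemma hasDerivAt_xiF' {ρ : ℝ} (hρ : 0 < ρ) :
    HasDerivAt xiF' (3 * xiF ρ - 2 * (Real.cosh ρ / Real.sinh ρ) * xiF' ρ) ρ := by
  have hsp : 0 < Real.sinh ρ := Real.sinh_pos_iff.2 hρ
  have hs : Real.sinh ρ ≠ 0 := ne_of_gt hsp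
  have h1 : HasDerivAt (fun ρ : ℝ => Real.exp (-2*ρ)) (-2 * Real.exp (-2*ρ)) ρ := by
    have h : HasDerivAt (fun ρ : ℝ => -2*ρ) (-2) ρ := by
      simpa using (hasDerivAt_id ρ).const_mul (-2 : ℝ)
    simpa [mul_comm] using h.exp
  have hnum : HasDerivAt
      (fun ρ => -2 * Real.exp (-2*ρ) * Real.sinh ρ - Real.exp (-2*ρ) * Real.cosh ρ)
      (3 * Real.exp (-2*ρ) * Real.sinh ρ) ρ := by
    have := ((h1.const_mul (-2 : ℝ)).mul (Real.hasDerivAt_sinh ρ)).sub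
      (h1.mul (Real.hasDerivAt_cosh ρ))
    refine this.congr_deriv ?_
    ring
  have hden : HasDerivAt (fun ρ => (Real.sinh ρ)^2) (2 * Real.cosh ρ * Real.sinh ρ) ρ := by
    have := (Real.hasDerivAt_sinh ρ).pow 2
    refine this.congr_deriv ?_
    ring
  have := hnum.div hden (by positivity)
  refine this.congr_deriv ?_
  have hc : Real.cosh ρ ^ 2 = 1 + Real.sinh ρ ^ 2 := by
    have := Real.cosh_sq_sub_sinh_sq ρ; nlinarith
  unfold xiF xiF'
  field_simp [xiF, xiF']

lemma second_deriv_test {g : ℝ → ℝ} {x c : ℝ} (hmin : IsLocalMin g x)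
    (hg : ∀ᶠ y in nhds x, DifferentiableAt ℝ g y)
    (hd : HasDerivAt (deriv g) c x) : 0 ≤ c := by
  by_contra hc
  push_neg at hc
  have h0 : deriv g x = 0 := hmin.deriv_eq_zero
  have hslope : Tendsto (slope (deriv g) x) (nhdsWithin x {x}ᶜ) (nhds c) :=
    hasDerivAt_iff_tendsto_slope.1 hd
  have hneg : ∀ᶠ y in nhdsWithin x {x}ᶜ, slope (deriv g) x y < 0 :=
    hslope.eventually_lt_const hc
  have hneg' : ∀ᶠ y in nhdsWithin x (Set.Ioi x), deriv g y < 0 := by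
    have hle : nhdsWithin x (Set.Ioi x) ≤ nhdsWithin x {x}ᶜ :=
      nhdsWithin_mono x (fun y hy => ne_of_gt hy)
    filter_upwards [hneg.filter_mono hle, self_mem_nhdsWithin] with y hy hy'
    have hxy : 0 < y - x := sub_pos.2 hy'
    have : slope (deriv g) x y = deriv g y / (y - x) := by
      simp [slope_def_field, h0, div_eq_inv_mul]
    rw [this] at hy
    by_contra hge
    push_neg at hge
    exact absurd (div_nonneg hge (le_of_lt hxy)) (not_le.2 hy)
  have hmin' : ∀ᶠ y in nhds x, g x ≤ g y := hmin
  -- get an interval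
  obtain ⟨u, hu, hIoo⟩ := mem_nhdsGT_iff_exists_Ioo_subset.1
    (hneg'.and ((hg.and hmin').filter_mono nhdsWithin_le_nhds))
  set b := (x + u) / 2 with hb
  have hxu : x < u := hu
  have hxb : x < b := by simp [hb]; linarith
  have hbu : b < u := by simp [hb]; linarith
  have hcont : ContinuousOn g (Set.Icc x b) := by
    intro y hy
    rcases eq_or_lt_of_le hy.1 with h | h
    · rw [← h]
      exact hg.self_of_nhds.continuousAt.continuousWithinAt
    · exact ((hIoo ⟨h, lt_of_le_of_lt hy.2 hbu⟩).2.1.continuousAt).continuousWithinAt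
  have hanti : StrictAntiOn g (Set.Icc x b) := by
    apply strictAntiOn_of_deriv_neg (convex_Icc x b) hcont
    intro y hy
    rw [interior_Icc] at hy
    exact (hIoo ⟨hy.1, lt_trans hy.2 hbu⟩).1
  have h1 : g b < g x := hanti (Set.left_mem_Icc.2 (le_of_lt hxb)) (Set.right_mem_Icc.2 (le_of_lt hxb)) hxb
  have h2 : g x ≤ g b := (hIoo ⟨hxb, hbu⟩).2.2
  linarith

lemma xiF_le {ρs ρ : ℝ} (hρs : 0 < ρs) (hρ : ρs ≤ ρ) :
    xiF ρ ≤ (2 / (1 - Real.exp (-2*ρs))) * Real.exp (-3*ρ) := by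
  have hc : Real.exp (-2*ρs) < 1 := Real.exp_lt_one_iff.2 (by linarith)
  have h1 : 0 < 1 - Real.exp (-2*ρs) := by linarith
  have hsp : 0 < Real.sinh ρ := Real.sinh_pos_iff.2 (by linarith)
  have hlow : Real.exp ρ * (1 - Real.exp (-2*ρs)) / 2 ≤ Real.sinh ρ := by
    rw [Real.sinh_eq]
    have h2 : Real.exp (-ρ) ≤ Real.exp (-2*ρs) * Real.exp ρ := by
      rw [← Real.exp_add]; exact Real.exp_le_exp.2 (by linarith)
    nlinarith [Real.exp_pos ρ]
  have hlowpos : 0 < Real.exp ρ * (1 - Real.exp (-2*ρs)) / 2 := by positivity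
  calc xiF ρ = Real.exp (-2*ρ) / Real.sinh ρ := rfl
    _ ≤ Real.exp (-2*ρ) / (Real.exp ρ * (1 - Real.exp (-2*ρs)) / 2) := by
        gcongr
    _ = (2 / (1 - Real.exp (-2*ρs))) * Real.exp (-3*ρ) := by
        have h3 : Real.exp ρ * Real.exp (-3*ρ) = Real.exp (-2*ρ) := by
          rw [← Real.exp_add]; ring_nf
        have h1' : (1 - Real.exp (-2*ρs)) ≠ 0 := ne_of_gt h1
        rw [div_eq_iff (ne_of_gt hlowpos), ← h3]
        generalize Real.exp ρ = E
        generalize Real.exp (-3*ρ) = F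
        generalize hcg : Real.exp (-2*ρs) = c at h1' ⊢
        field_simp

lemma xiF_tendsto : Tendsto xiF atTop (nhds 0) := by
  have h3 : Tendsto (fun ρ : ℝ => Real.exp (-2*ρ)) atTop (nhds 0) := by
    apply Real.tendsto_exp_atBot.comp
    exact (tendsto_const_mul_atBot_of_neg (by norm_num : (-2:ℝ) < 0)).2 tendsto_id
  have hsinh : Tendsto Real.sinh atTop atTop := by
    have h5 : Tendsto (fun x : ℝ => Real.exp (-x)) atTop (nhds 0) := by
      apply Real.tendsto_exp_atBot.comp
      simpa using (tendsto_neg_atBot_iff (α := ℝ)).2 tendsto_id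
    have h6 : Tendsto (fun x : ℝ => Real.exp x - Real.exp (-x)) atTop atTop := by
      simpa [sub_eq_add_neg] using Real.tendsto_exp_atTop.atTop_add h5.neg
    have := h6.atTop_div_const (by norm_num : (0:ℝ) < 2)
    exact this.congr (fun x => (Real.sinh_eq x).symm)
  have h4 : Tendsto (fun ρ : ℝ => (Real.sinh ρ)⁻¹) atTop (nhds 0) :=
    hsinh.inv_tendsto_atTop
  have h7 := h3.mul h4
  rw [mul_zero] at h7
  exact h7.congr (fun x => (div_eq_mul_inv _ _).symm)

lemma comparison (ρs : ℝ) (hρs : 0 < ρs) (η : ℝ → ℝ) (A : ℝ) (hA : 0 ≤ A)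
    (hcont : ContinuousOn η (Set.Ici ρs))
    (hd1 : ∀ ρ, ρs < ρ → DifferentiableAt ℝ η ρ)
    (hd2 : ∀ ρ, ρs < ρ → DifferentiableAt ℝ (deriv η) ρ)
    (hode : ∀ ρ, ρs < ρ → 0 < η ρ →
      3 * η ρ ≤ deriv (deriv η) ρ + 2 * (Real.cosh ρ / Real.sinh ρ) * deriv η ρ)
    (h0 : η ρs ≤ A * xiF ρs)
    (hlim : Tendsto η atTop (nhds 0)) :
    ∀ ρ, ρs ≤ ρ → η ρ ≤ A * xiF ρ := by
  set w : ℝ → ℝ := fun ρ => A * xiF ρ - η ρ with hw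
  -- first-derivative function of w on (ρs, ∞)
  have hWd : ∀ ρ, ρs < ρ → HasDerivAt w (A * xiF' ρ - deriv η ρ) ρ := by
    intro ρ hρ
    exact ((hasDerivAt_xiF (lt_trans hρs hρ)).const_mul A).sub (hd1 ρ hρ).hasDerivAt
  by_contra hcon
  push_neg at hcon
  obtain ⟨ρ₁, hρ₁, hρ₁'⟩ := hcon
  have hwρ₁ : w ρ₁ < 0 := by simp [hw]; linarith
  set m := w ρ₁ with hm
  -- w tends to 0 at infinity
  have hwlim : Tendsto w atTop (nhds 0) := by
    have := (xiF_tendsto.const_mul A).sub hlim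
    simpa using this
  -- find R beyond which w > m/2
  have hev : ∀ᶠ ρ in atTop, m / 2 < w ρ := by
    apply hwlim.eventually_const_lt
    linarith
  obtain ⟨R₀, hR₀⟩ := hev.exists_forall_of_atTop
  set R := max R₀ ρ₁ with hR
  have hρ₁R : ρ₁ ≤ R := le_max_right _ _
  have hρsR : ρs ≤ R := le_trans hρ₁ hρ₁R
  -- w is continuous on [ρs, R]
  have hwcont : ContinuousOn w (Set.Icc ρs R) := by
    apply ContinuousOn.sub
    · intro x hx
      have hxpos : 0 < x := lt_of_lt_of_le hρs hx.1
      exact ((hasDerivAt_xiF hxpos).const_mul A).differentiableAt.continuousAt.continuousWithinAt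
    · exact hcont.mono (fun x hx => hx.1)
  obtain ⟨ρ₀, hρ₀mem, hρ₀min⟩ :=
    isCompact_Icc.exists_isMinOn (Set.nonempty_Icc.2 hρsR) hwcont
  have hwρ₀ : w ρ₀ ≤ m := hρ₀min ⟨hρ₁, hρ₁R⟩
  have hρ₀ne1 : ρ₀ ≠ ρs := by
    intro h
    have : 0 ≤ w ρs := by simp [hw]; linarith [h0]
    rw [h] at hwρ₀; linarith
  have hρ₀ne2 : ρ₀ ≠ R := by
    intro h
    have h5 : m / 2 < w R := hR₀ R (le_max_left _ _)
    rw [h] at hwρ₀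
    have h6 : m / 2 < m := lt_of_lt_of_le h5 hwρ₀
    linarith
  have hρ₀gt : ρs < ρ₀ := lt_of_le_of_ne hρ₀mem.1 (Ne.symm hρ₀ne1)
  have hρ₀lt : ρ₀ < R := lt_of_le_of_ne hρ₀mem.2 hρ₀ne2
  have hρ₀pos : 0 < ρ₀ := lt_trans hρs hρ₀gt
  -- it's a local min
  have hnhds : Set.Icc ρs R ∈ nhds ρ₀ := Icc_mem_nhds hρ₀gt hρ₀lt
  have hlocmin : IsLocalMin w ρ₀ := hρ₀min.isLocalMin hnhds
  -- deriv w = w1 near ρ₀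
  have hIoi : Set.Ioi ρs ∈ nhds ρ₀ := Ioi_mem_nhds hρ₀gt
  have hderiv_eq : ∀ᶠ ρ in nhds ρ₀, deriv w ρ = A * xiF' ρ - deriv η ρ := by
    filter_upwards [hIoi] with ρ hρ
    exact (hWd ρ hρ).deriv
  have hW2 : HasDerivAt (deriv w)
      (A * (3 * xiF ρ₀ - 2 * (Real.cosh ρ₀ / Real.sinh ρ₀) * xiF' ρ₀)
        - deriv (deriv η) ρ₀) ρ₀ := by
    have h := ((hasDerivAt_xiF' hρ₀pos).const_mul A).sub (hd2 ρ₀ hρ₀gt).hasDerivAt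
    exact h.congr_of_eventuallyEq hderiv_eq
  have hdiff : ∀ᶠ y in nhds ρ₀, DifferentiableAt ℝ w y := by
    filter_upwards [hIoi] with ρ hρ
    exact (hWd ρ hρ).differentiableAt
  have hc := second_deriv_test hlocmin hdiff hW2
  -- deriv w ρ₀ = 0
  have hd0 : A * xiF' ρ₀ - deriv η ρ₀ = 0 := by
    rw [← (hWd ρ₀ hρ₀gt).deriv]
    exact hlocmin.deriv_eq_zero
  -- η ρ₀ > 0
  have hηpos : 0 < η ρ₀ := by
    have h1 : 0 ≤ A * xiF ρ₀ := mul_nonneg hA (le_of_lt (xiF_pos hρ₀pos))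
    have h2 : w ρ₀ < 0 := lt_of_le_of_lt hwρ₀ hwρ₁
    simp [hw] at h2
    linarith
  have hODE := hode ρ₀ hρ₀gt hηpos
  have hwneg : w ρ₀ < 0 := lt_of_le_of_lt hwρ₀ hwρ₁
  simp only [hw] at hwneg
  have hkey : 2 * (Real.cosh ρ₀ / Real.sinh ρ₀) * (A * xiF' ρ₀ - deriv η ρ₀) = 0 := by
    rw [hd0]; ring
  nlinarith [hc, hODE, hwneg, hkey]

set_option maxHeartbeats 1000000 in
/-- Decay estimate: under the hypotheses of the radial comparison principle,
`|u₁(ρ) - u₂(ρ)| ≤ C |u₁(ρ*) - u₂(ρ*)| e^{-3ρ}` for all `ρ ≥ ρ*`, where `C` depends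
only on `ρ*`. -/
theorem radial_decay_estimate (ρs : ℝ) (hρs : 0 < ρs) :
    ∃ C : ℝ, 0 < C ∧ ∀ u₁ u₂ f : ℝ → ℝ,
      ContDiffOn ℝ 2 u₁ (Set.Ici ρs) → ContDiffOn ℝ 2 u₂ (Set.Ici ρs) →
      (∀ ρ, ρs ≤ ρ → 1 ≤ u₁ ρ) → (∀ ρ, ρs ≤ ρ → 1 ≤ u₂ ρ) →
      (∀ ρ, ρs < ρ →
        deriv (deriv u₁) ρ + 2 * (Real.cosh ρ / Real.sinh ρ) * deriv u₁ ρ +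
          (3 / 4) * u₁ ρ * (1 - (u₁ ρ) ^ 4) = f ρ) →
      (∀ ρ, ρs < ρ →
        deriv (deriv u₂) ρ + 2 * (Real.cosh ρ / Real.sinh ρ) * deriv u₂ ρ +
          (3 / 4) * u₂ ρ * (1 - (u₂ ρ) ^ 4) = f ρ) →
      Filter.Tendsto (fun ρ => u₁ ρ - u₂ ρ) Filter.atTop (nhds 0) →
      ∀ ρ, ρs ≤ ρ → |u₁ ρ - u₂ ρ| ≤ C * |u₁ ρs - u₂ ρs| * Real.exp (-3 * ρ) := by
  have hxis : 0 < xiF ρs := xiF_pos hρs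
  have hc1 : Real.exp (-2*ρs) < 1 := Real.exp_lt_one_iff.2 (by linarith)
  set B : ℝ := 2 / (1 - Real.exp (-2*ρs)) with hB
  have hBpos : 0 < B := by
    rw [hB]; apply div_pos; norm_num; linarith
  refine ⟨B / xiF ρs, div_pos hBpos hxis, ?_⟩
  intro u₁ u₂ f hu₁ hu₂ hu₁1 hu₂1 hode₁ hode₂ hlim ρ hρ
  set η : ℝ → ℝ := fun ρ => u₁ ρ - u₂ ρ with hη
  set A : ℝ := |η ρs| / xiF ρs with hA
  have hA0 : 0 ≤ A := div_nonneg (abs_nonneg _) (le_of_lt hxis)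
  -- differentiability facts
  have hmem : ∀ {x : ℝ}, ρs < x → Set.Ici ρs ∈ nhds x := fun hx =>
    mem_of_superset (Ioi_mem_nhds hx) Set.Ioi_subset_Ici_self
  have hdiff₁ : ∀ x, ρs < x → DifferentiableAt ℝ u₁ x := fun x hx =>
    ((hu₁.differentiableOn (by norm_num)).differentiableAt (hmem hx))
  have hdiff₂ : ∀ x, ρs < x → DifferentiableAt ℝ u₂ x := fun x hx =>
    ((hu₂.differentiableOn (by norm_num)).differentiableAt (hmem hx))
  have hdu₁ : ContDiffOn ℝ 1 (deriv u₁) (Set.Ioi ρs) :=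
    (hu₁.mono Set.Ioi_subset_Ici_self).deriv_of_isOpen isOpen_Ioi (by norm_num)
  have hdu₂ : ContDiffOn ℝ 1 (deriv u₂) (Set.Ioi ρs) :=
    (hu₂.mono Set.Ioi_subset_Ici_self).deriv_of_isOpen isOpen_Ioi (by norm_num)
  have hdiffd₁ : ∀ x, ρs < x → DifferentiableAt ℝ (deriv u₁) x := fun x hx =>
    ((hdu₁.differentiableOn one_ne_zero).differentiableAt (Ioi_mem_nhds hx))
  have hdiffd₂ : ∀ x, ρs < x → DifferentiableAt ℝ (deriv u₂) x := fun x hx =>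
    ((hdu₂.differentiableOn one_ne_zero).differentiableAt (Ioi_mem_nhds hx))
  -- deriv η
  have hderivη : ∀ x, ρs < x → deriv η x = deriv u₁ x - deriv u₂ x := fun x hx =>
    deriv_sub (hdiff₁ x hx) (hdiff₂ x hx)
  have hderivη_ev : ∀ x, ρs < x → deriv η =ᶠ[nhds x] fun y => deriv u₁ y - deriv u₂ y := by
    intro x hx
    filter_upwards [Ioi_mem_nhds hx] with y hy
    exact hderivη y hy
  have hd2η : ∀ x, ρs < x → DifferentiableAt ℝ (deriv η) x := by
    intro x hx
    exact ((hdiffd₁ x hx).sub (hdiffd₂ x hx)).congr_of_eventuallyEq (hderivη_ev x hx)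
  have hderiv2η : ∀ x, ρs < x →
      deriv (deriv η) x = deriv (deriv u₁) x - deriv (deriv u₂) x := by
    intro x hx
    rw [Filter.EventuallyEq.deriv_eq (hderivη_ev x hx)]
    exact deriv_sub (hdiffd₁ x hx) (hdiffd₂ x hx)
  have hcontη : ContinuousOn η (Set.Ici ρs) :=
    (hu₁.continuousOn).sub (hu₂.continuousOn)
  -- the ODE inequality for η and -η
  have hodekey : ∀ x, ρs < x →
      deriv (deriv η) x + 2 * (Real.cosh x / Real.sinh x) * deriv η x
        = (3/4) * ((u₁ x ^ 5 - u₂ x ^ 5) - (u₁ x - u₂ x)) := by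
    intro x hx
    have h₁ := hode₁ x hx
    have h₂ := hode₂ x hx
    rw [hderiv2η x hx, hderivη x hx]
    ring_nf
    ring_nf at h₁ h₂
    linarith [h₁, h₂]
  have hquint : ∀ a b : ℝ, 1 ≤ a → 1 ≤ b → 0 < a - b →
      3 * (a - b) ≤ (3/4) * ((a^5 - b^5) - (a - b)) := by
    intro a b ha hb hab
    have key : a^5 - b^5 = (a-b)*(a^4+a^3*b+a^2*b^2+a*b^3+b^4) := by ring
    have h2a : 1 ≤ a^2 := by nlinarith
    have h2b : 1 ≤ b^2 := by nlinarith
    have h4a : 1 ≤ a^4 := by nlinarith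
    have h4b : 1 ≤ b^4 := by nlinarith
    have h3ab : 1 ≤ a^3*b := by nlinarith [mul_nonneg (by nlinarith : (0:ℝ) ≤ a^3 - 1) (by linarith : (0:ℝ) ≤ b - 1)]
    have h3ba : 1 ≤ a*b^3 := by nlinarith [mul_nonneg (by linarith : (0:ℝ) ≤ a - 1) (by nlinarith : (0:ℝ) ≤ b^3 - 1)]
    have h22 : 1 ≤ a^2*b^2 := by nlinarith [mul_nonneg (by nlinarith : (0:ℝ) ≤ a^2 - 1) (by nlinarith : (0:ℝ) ≤ b^2 - 1)]
    have hS : 5 ≤ a^4+a^3*b+a^2*b^2+a*b^3+b^4 := by linarith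
    nlinarith [mul_nonneg (le_of_lt hab) (by linarith : (0:ℝ) ≤ a^4+a^3*b+a^2*b^2+a*b^3+b^4 - 5), key]
  -- apply comparison to η
  have hcmp₁ := comparison ρs hρs η A hA0 hcontη
    (fun x hx => (hdiff₁ x hx).sub (hdiff₂ x hx)) hd2η
    (by
      intro x hx hpos
      rw [hodekey x hx]
      exact hquint (u₁ x) (u₂ x) (hu₁1 x (le_of_lt hx)) (hu₂1 x (le_of_lt hx)) hpos)
    (by rw [hA, div_mul_cancel₀ _ (ne_of_gt hxis)]; exact le_abs_self _)
    hlim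
  -- apply comparison to -η
  have hcmp₂ := comparison ρs hρs (fun x => -η x) A hA0 hcontη.neg
    (fun x hx => ((hdiff₁ x hx).sub (hdiff₂ x hx)).neg)
    (by
      intro x hx
      have : deriv (fun y => -η y) =ᶠ[nhds x] fun y => -deriv η y := by
        filter_upwards [Ioi_mem_nhds hx] with y hy
        exact deriv.neg
      exact ((hd2η x hx).neg).congr_of_eventuallyEq this)
    (by
      intro x hx hpos
      have hnegd : deriv (fun y => -η y) x = -deriv η x := deriv.neg
      have hnegd2 : deriv (deriv (fun y => -η y)) x = -deriv (deriv η) x := by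
        have hev : deriv (fun y => -η y) =ᶠ[nhds x] fun y => -deriv η y := by
          filter_upwards [Ioi_mem_nhds hx] with y hy
          exact deriv.neg
        rw [Filter.EventuallyEq.deriv_eq hev]
        exact deriv.neg
      rw [hnegd, hnegd2]
      have hkey := hodekey x hx
      have hq := hquint (u₂ x) (u₁ x) (hu₂1 x (le_of_lt hx)) (hu₁1 x (le_of_lt hx))
        (by simpa [hη] using hpos)
      simp only [hη] at hkey ⊢
      nlinarith [hkey, hq]
      )
    (by rw [hA, div_mul_cancel₀ _ (ne_of_gt hxis)]; exact neg_le_abs _)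
    (by simpa using hlim.neg)
  -- combine
  have habs : |η ρ| ≤ A * xiF ρ := by
    rw [abs_le]
    constructor
    · have := hcmp₂ ρ hρ; linarith
    · exact hcmp₁ ρ hρ
  have hxile : xiF ρ ≤ B * Real.exp (-3*ρ) := xiF_le hρs hρ
  calc |u₁ ρ - u₂ ρ| = |η ρ| := rfl
    _ ≤ A * xiF ρ := habs
    _ ≤ A * (B * Real.exp (-3*ρ)) := by
        apply mul_le_mul_of_nonneg_left hxile hA0
    _ = B / xiF ρs * |u₁ ρs - u₂ ρs| * Real.exp (-3 * ρ) := by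
        rw [hA]
        field_simp
        ring
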